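/- Let m₀, m₁, m₂, γ, L be real numbers with m₀ ≠ 0, L > 0 and L² > 4γ². Set B = 4m₀² + 2m₀m₁ + m₂, r₀ = −4m₀²B, and h(x,t) = exp(2(−2m₀x + r₀t)). Then the open set U = {(x,t) ∈ ℝ² : L h(x,t) − γ² h(x,t)² − 1 > 0} is nonempty, and on U the functions a = √(Lh − γ²h² − 1), b = γh, c = (γ²h² − 1)/a satisfy the Gauss equation ac − b² = −1. Moreover, for every smooth function u : ℝ² → ℝ, setting φ = (m₁+2m₀)u_{xx} + Bu_x − u²/2 + 2m₀B and f₁₁ = f₃₁ = u, f₁₂ = f₃₂ = u_{xxx} + φ, f₂₁ = −2m₀, f₂₂ = r₀, the Codazzi equations f₁₁ ∂_t a + f₂₁ ∂_t b − f₁₂ ∂_x a − f₂₂ ∂_x b − 2bΔ₁₃ + (a−c)Δ₂₃ = 0 and f₁₁ ∂_t b + f₂₁ ∂_t c − f₁₂ ∂_x b − f₂₂ ∂_x c + (a−c)Δ₁₃ + 2bΔ₂₃ = 0 hold on U, where Δ₁₃ = f₁₁f₃₂ − f₃₁f₁₂ and Δ₂₃ = f₂₁f₃₂ − f₃₁f₂₂.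 -/

import Mathlib

/-- `h(x,t) = exp(2(-2m₀x + r₀t))`. -/
noncomputable def hExp (m₀ r₀ x t : ℝ) : ℝ := Real.exp (2 * (-(2 * m₀) * x + r₀ * t))

/-- `a = √(Lh - γ²h² - 1)`. -/
noncomputable def aImm (m₀ r₀ γ L x t : ℝ) : ℝ :=
  Real.sqrt (L * hExp m₀ r₀ x t - γ ^ 2 * (hExp m₀ r₀ x t) ^ 2 - 1)

/-- `b = γh`. -/
noncomputable def bImm (m₀ r₀ γ x t : ℝ) : ℝ := γ * hExp m₀ r₀ x t

/-- `c = (γ²h² - 1)/a`. -/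
noncomputable def cImm (m₀ r₀ γ L x t : ℝ) : ℝ :=
  (γ ^ 2 * (hExp m₀ r₀ x t) ^ 2 - 1) / aImm m₀ r₀ γ L x t

/-- `u_x`. -/
noncomputable def uX (u : ℝ → ℝ → ℝ) (x t : ℝ) : ℝ := deriv (fun s => u s t) x

/-- `u_xx`. -/
noncomputable def uXX (u : ℝ → ℝ → ℝ) (x t : ℝ) : ℝ := deriv (fun s => uX u s t) x

/-- `u_xxx`. -/
noncomputable def uXXX (u : ℝ → ℝ → ℝ) (x t : ℝ) : ℝ := deriv (fun s => uXX u s t) x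

/-- `φ = (m₁ + 2m₀)u_xx + Bu_x - u²/2 + 2m₀B`. -/
noncomputable def phiF (m₀ m₁ B : ℝ) (u : ℝ → ℝ → ℝ) (x t : ℝ) : ℝ :=
  (m₁ + 2 * m₀) * uXX u x t + B * uX u x t - (u x t) ^ 2 / 2 + 2 * m₀ * B

/-- `f₁₂ = f₃₂ = u_xxx + φ`. -/
noncomputable def f12F (m₀ m₁ B : ℝ) (u : ℝ → ℝ → ℝ) (x t : ℝ) : ℝ :=
  uXXX u x t + phiF m₀ m₁ B u x t

lemma hasDerivAt_exp_affine (p q x : ℝ) :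
    HasDerivAt (fun s => Real.exp (p * s + q)) (p * Real.exp (p * x + q)) x := by
  have h1 : HasDerivAt (fun s : ℝ => p * s + q) p x := by
    simpa using ((hasDerivAt_id x).const_mul p).add_const q
  have h2 := h1.exp
  rw [mul_comm]
  exact h2

lemma hExp_x (m₀ r₀ t x : ℝ) :
    HasDerivAt (fun s => hExp m₀ r₀ s t) ((-(4 * m₀)) * hExp m₀ r₀ x t) x := by
  have he : (fun s => hExp m₀ r₀ s t) = fun s => Real.exp ((-(4 * m₀)) * s + 2 * r₀ * t) := by
    funext s; unfold hExp; congr 1; ring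
  have := hasDerivAt_exp_affine (-(4 * m₀)) (2 * r₀ * t) x
  rw [he]
  convert this using 2
  unfold hExp; congr 1; ring

lemma hExp_t (m₀ r₀ x t : ℝ) :
    HasDerivAt (fun s => hExp m₀ r₀ x s) ((2 * r₀) * hExp m₀ r₀ x t) t := by
  have he : (fun s => hExp m₀ r₀ x s) = fun s => Real.exp ((2 * r₀) * s + (-(4 * m₀)) * x) := by
    funext s; unfold hExp; congr 1; ring
  have := hasDerivAt_exp_affine (2 * r₀) ((-(4 * m₀)) * x) t
  rw [he]
  convert this using 2
  unfold hExp; congr 1; ring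

lemma sqrtQ_deriv {f : ℝ → ℝ} {x d : ℝ} (L γ : ℝ) (hf : HasDerivAt f d x)
    (hQ : 0 < L * f x - γ ^ 2 * (f x) ^ 2 - 1) :
    HasDerivAt (fun s => Real.sqrt (L * f s - γ ^ 2 * (f s) ^ 2 - 1))
      ((L - 2 * γ ^ 2 * f x) * d / (2 * Real.sqrt (L * f x - γ ^ 2 * (f x) ^ 2 - 1))) x := by
  have hQ' : HasDerivAt (fun s => L * f s - γ ^ 2 * (f s) ^ 2 - 1)
      (L * d - γ ^ 2 * (2 * f x ^ 1 * d)) x :=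
    ((hf.const_mul L).sub ((hf.pow 2).const_mul (γ ^ 2))).sub_const 1
  have hs := (Real.hasDerivAt_sqrt hQ.ne').comp x hQ'
  exact hs.congr_deriv (by ring)

lemma quotQ_deriv {f : ℝ → ℝ} {x d : ℝ} (L γ : ℝ) (hf : HasDerivAt f d x)
    (hQ : 0 < L * f x - γ ^ 2 * (f x) ^ 2 - 1) :
    HasDerivAt (fun s => (γ ^ 2 * (f s) ^ 2 - 1) / Real.sqrt (L * f s - γ ^ 2 * (f s) ^ 2 - 1))
      ((γ ^ 2 * (2 * f x * d) * Real.sqrt (L * f x - γ ^ 2 * (f x) ^ 2 - 1)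
          - (γ ^ 2 * (f x) ^ 2 - 1) *
            ((L - 2 * γ ^ 2 * f x) * d / (2 * Real.sqrt (L * f x - γ ^ 2 * (f x) ^ 2 - 1))))
        / (L * f x - γ ^ 2 * (f x) ^ 2 - 1)) x := by
  have hnum : HasDerivAt (fun s => γ ^ 2 * (f s) ^ 2 - 1) (γ ^ 2 * (2 * f x * d)) x := by
    have := ((hf.pow 2).const_mul (γ ^ 2)).sub_const 1
    exact this.congr_deriv (by ring)
  have hden := sqrtQ_deriv L γ hf hQ
  have hsp : Real.sqrt (L * f x - γ ^ 2 * (f x) ^ 2 - 1) ≠ 0 := (Real.sqrt_pos.2 hQ).ne'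
  have := hnum.div hden hsp
  exact this.congr_deriv (by rw [Real.sq_sqrt hQ.le])

/-- for the fourth-order evolution equation
`u_t = u_xxxx + m₁u_xxx + m₂u_xx - uu_x + m₀u²`, the open set
`U = {Lh - γ²h² - 1 > 0}` is nonempty, the universal functions `a = √(Lh - γ²h² - 1)`,
`b = γh`, `c = (γ²h² - 1)/a` satisfy the Gauss equation on `U`, and for every smooth `u`
they satisfy both Codazzi equations on `U`, where `f₁₁ = f₃₁ = u`, `f₁₂ = f₃₂ = u_xxx + φ`,
`f₂₁ = -2m₀`, `f₂₂ = r₀`. -/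
theorem fourth_order_example_universal_immersion
    (m₀ m₁ m₂ γ L B r₀ : ℝ) (hm₀ : m₀ ≠ 0) (hL : 0 < L) (hγL : 4 * γ ^ 2 < L ^ 2)
    (hB : B = 4 * m₀ ^ 2 + 2 * m₀ * m₁ + m₂) (hr₀ : r₀ = -4 * m₀ ^ 2 * B) :
    (∃ x t : ℝ, 0 < L * hExp m₀ r₀ x t - γ ^ 2 * (hExp m₀ r₀ x t) ^ 2 - 1) ∧
    (∀ x t : ℝ, 0 < L * hExp m₀ r₀ x t - γ ^ 2 * (hExp m₀ r₀ x t) ^ 2 - 1 →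
      aImm m₀ r₀ γ L x t * cImm m₀ r₀ γ L x t - (bImm m₀ r₀ γ x t) ^ 2 = -1) ∧
    (∀ u : ℝ → ℝ → ℝ, ContDiff ℝ (⊤ : ℕ∞) (fun p : ℝ × ℝ => u p.1 p.2) →
      ∀ x t : ℝ, 0 < L * hExp m₀ r₀ x t - γ ^ 2 * (hExp m₀ r₀ x t) ^ 2 - 1 →
      (u x t * deriv (fun s => aImm m₀ r₀ γ L x s) t
          + (-(2 * m₀)) * deriv (fun s => bImm m₀ r₀ γ x s) t
          - f12F m₀ m₁ B u x t * deriv (fun s => aImm m₀ r₀ γ L s t) x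
          - r₀ * deriv (fun s => bImm m₀ r₀ γ s t) x
          - 2 * bImm m₀ r₀ γ x t
              * (u x t * f12F m₀ m₁ B u x t - u x t * f12F m₀ m₁ B u x t)
          + (aImm m₀ r₀ γ L x t - cImm m₀ r₀ γ L x t)
              * ((-(2 * m₀)) * f12F m₀ m₁ B u x t - u x t * r₀) = 0) ∧
      (u x t * deriv (fun s => bImm m₀ r₀ γ x s) t
          + (-(2 * m₀)) * deriv (fun s => cImm m₀ r₀ γ L x s) t
          - f12F m₀ m₁ B u x t * deriv (fun s => bImm m₀ r₀ γ s t) x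
          - r₀ * deriv (fun s => cImm m₀ r₀ γ L s t) x
          + (aImm m₀ r₀ γ L x t - cImm m₀ r₀ γ L x t)
              * (u x t * f12F m₀ m₁ B u x t - u x t * f12F m₀ m₁ B u x t)
          + 2 * bImm m₀ r₀ γ x t
              * ((-(2 * m₀)) * f12F m₀ m₁ B u x t - u x t * r₀) = 0)) := by
  refine ⟨?_, ?_, ?_⟩
  · -- nonemptiness
    set h₀ : ℝ := 4 * L / (L ^ 2 + 4 * γ ^ 2) with hh₀
    have hden : 0 < L ^ 2 + 4 * γ ^ 2 := by positivity
    have hh₀pos : 0 < h₀ := by positivity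
    refine ⟨Real.log h₀ / (-(4 * m₀)), 0, ?_⟩
    have hx : hExp m₀ r₀ (Real.log h₀ / (-(4 * m₀))) 0 = h₀ := by
      unfold hExp
      rw [show 2 * (-(2 * m₀) * (Real.log h₀ / (-(4 * m₀))) + r₀ * 0) = Real.log h₀ by
        field_simp; ring]
      exact Real.exp_log hh₀pos
    rw [hx]
    have key : 0 < 3 * L ^ 4 - 8 * L ^ 2 * γ ^ 2 - 16 * γ ^ 4 := by nlinarith
    have heq : L * h₀ - γ ^ 2 * h₀ ^ 2 - 1
        = (3 * L ^ 4 - 8 * L ^ 2 * γ ^ 2 - 16 * γ ^ 4) / (L ^ 2 + 4 * γ ^ 2) ^ 2 := by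
      rw [hh₀]; field_simp; ring
    rw [heq]
    exact div_pos key (by positivity)
  · -- Gauss
    intro x t hQ
    have ha : aImm m₀ r₀ γ L x t ≠ 0 := (Real.sqrt_pos.2 hQ).ne'
    unfold cImm bImm
    field_simp
    ring
  · -- Codazzi
    intro u hu x t hQ
    have hft := hExp_t m₀ r₀ x t
    have hfx := hExp_x m₀ r₀ t x
    have eat := (sqrtQ_deriv L γ hft hQ).deriv
    have eax := (sqrtQ_deriv L γ hfx hQ).deriv
    have ect := (quotQ_deriv L γ hft hQ).deriv
    have ecx := (quotQ_deriv L γ hfx hQ).deriv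
    have ebt := ((hft.const_mul γ)).deriv
    have ebx := ((hfx.const_mul γ)).deriv
    have hS : 0 < Real.sqrt (L * hExp m₀ r₀ x t - γ ^ 2 * (hExp m₀ r₀ x t) ^ 2 - 1) :=
      Real.sqrt_pos.2 hQ
    have hSq : (Real.sqrt (L * hExp m₀ r₀ x t - γ ^ 2 * (hExp m₀ r₀ x t) ^ 2 - 1)) ^ 2
        = L * hExp m₀ r₀ x t - γ ^ 2 * (hExp m₀ r₀ x t) ^ 2 - 1 := Real.sq_sqrt hQ.le
    set S := Real.sqrt (L * hExp m₀ r₀ x t - γ ^ 2 * (hExp m₀ r₀ x t) ^ 2 - 1) with hSdef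
    set h := hExp m₀ r₀ x t with hhdef
    set F := f12F m₀ m₁ B u x t with hFdef
    constructor
    · simp only [aImm, bImm, cImm]
      rw [eat, eax, ebt, ebx]
      rw [← hSdef, ← hhdef]
      field_simp
      linear_combination (-(2 * r₀ * u x t + 4 * m₀ * F)) * hSq
    · simp only [aImm, bImm, cImm]
      rw [ect, ecx, ebt, ebx]
      rw [← hSdef, ← hhdef]
      field_simp
      ring
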